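/- Let H be a real Hilbert space, Q a nonempty closed convex subset of H, g : Q × Q → ℝ a monotone bifunction on Q with g(u, u) = 0 for all u ∈ Q, and T : Q → Q a nonexpansive mapping. Let α > 0, a ∈ H, and let u ∈ Q satisfy g(u, v) + (1/α)⟨v − u, u − a⟩ ≥ 0 for all v ∈ Q. If s ∈ Q satisfies T(s) = s and g(s, v) ≥ 0 for all v ∈ Q, then ⟨a − s, T(u) − a⟩ ≤ −(1/2)‖u − a‖² − (1/2)‖T(u) − a‖². -/

import Mathlib

/-- Key inner-product estimate: if `u = T_α^g(a)` and `s` is a common solution/fixed point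
(`T(s) = s`, `g(s, ·) ≥ 0`), then `⟨a − s, T(u) − a⟩ ≤ −(1/2)‖u − a‖² − (1/2)‖T(u) − a‖²`. -/
theorem resolvent_fixedpoint_inner_estimate
    {H : Type*} [NormedAddCommGroup H] [InnerProductSpace ℝ H] [CompleteSpace H]
    (Q : Set H) (hQne : Q.Nonempty) (hQcl : IsClosed Q) (hQcv : Convex ℝ Q)
    (g : H → H → ℝ)
    (hg0 : ∀ u ∈ Q, g u u = 0)
    (hmono : ∀ u ∈ Q, ∀ v ∈ Q, g u v + g v u ≤ 0)
    (T : H → H) (hT : Set.MapsTo T Q Q)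
    (hTne : ∀ x ∈ Q, ∀ y ∈ Q, ‖T x - T y‖ ≤ ‖x - y‖)
    (α : ℝ) (hα : 0 < α) (a : H)
    (u : H) (huQ : u ∈ Q)
    (hu : ∀ v ∈ Q, g u v + (1 / α) * (inner ℝ (v - u) (u - a) : ℝ) ≥ 0)
    (s : H) (hsQ : s ∈ Q) (hsfix : T s = s) (hs : ∀ v ∈ Q, g s v ≥ 0) :
    (inner ℝ (a - s) (T u - a) : ℝ) ≤ -(1 / 2) * ‖u - a‖ ^ 2 - (1 / 2) * ‖T u - a‖ ^ 2 := by
  have hgsu : g s u ≥ 0 := hs u huQ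
  have hgus : g u s ≤ 0 := by linarith [hmono u huQ s hsQ]
  have hα' : (0:ℝ) < 1 / α := by positivity
  have h1 : (0:ℝ) ≤ inner ℝ (s - u) (u - a) := by
    have h := hu s hsQ
    nlinarith [h, hgus]
  have h2 : ‖T u - s‖ ≤ ‖u - s‖ := by simpa [hsfix] using hTne u huQ s hsQ
  have h2' : ‖T u - s‖ ^ 2 ≤ ‖u - s‖ ^ 2 :=
    pow_le_pow_left₀ (norm_nonneg _) h2 2
  have e1 : ‖T u - s‖ ^ 2
      = ‖T u - a‖ ^ 2 + 2 * inner ℝ (T u - a) (a - s) + ‖a - s‖ ^ 2 := by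
    have h := norm_add_sq_real (T u - a) (a - s)
    rw [sub_add_sub_cancel] at h
    exact h
  have e2 : ‖u - s‖ ^ 2
      = ‖u - a‖ ^ 2 + 2 * inner ℝ (u - a) (a - s) + ‖a - s‖ ^ 2 := by
    have h := norm_add_sq_real (u - a) (a - s)
    rw [sub_add_sub_cancel] at h
    exact h
  have e3 : (inner ℝ (s - u) (u - a) : ℝ)
      = -(‖u - a‖ ^ 2) - inner ℝ (a - s) (u - a) := by
    have hsu : s - u = -((u - a) + (a - s)) := by abel
    rw [hsu, inner_neg_left, inner_add_left, real_inner_self_eq_norm_sq]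
    ring
  have hc1 : (inner ℝ (a - s) (u - a) : ℝ) = inner ℝ (u - a) (a - s) :=
    real_inner_comm _ _
  have hc2 : (inner ℝ (a - s) (T u - a) : ℝ) = inner ℝ (T u - a) (a - s) :=
    real_inner_comm _ _
  linarith
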